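/- The function H̃ is concave in the pair (γ, 1/k) in the following sense: for all positive integers k₁, k₂, k₃, all γ₁, γ₂, γ₃ ∈ [0,1], and all α ∈ [0,1] such that α·γ₁ + (1−α)·γ₃ = γ₂ and α·(1/k₁) + (1−α)·(1/k₃) = 1/k₂, one has α·H̃(γ₁, 1/k₁) + (1−α)·H̃(γ₃, 1/k₃) ≤ H̃(γ₂, 1/k₂). -/

import Mathlib

/-- Shannon entropy (in bits) of a pmf on `{0,1,…,k}`, with the convention
`0 · log₂ 0 = 0` (automatic since `Real.logb 2 0 = 0`). -/
noncomputable def shannonEntropy (k : ℕ) (p : ℕ → ℝ) : ℝ :=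
  -∑ i ∈ Finset.range (k + 1), p i * Real.logb 2 (p i)

/-- `H̃(γ, 1/k)`: `(1/k)` times the supremum of the entropies of pmfs on `{0,…,k}`
with mean `kγ`. -/
noncomputable def Htilde (k : ℕ) (γ : ℝ) : ℝ :=
  (1 / (k : ℝ)) * sSup { h : ℝ | ∃ p : ℕ → ℝ,
    (∀ i ∈ Finset.range (k + 1), 0 ≤ p i) ∧
    (∑ i ∈ Finset.range (k + 1), p i = 1) ∧
    (∑ i ∈ Finset.range (k + 1), (i : ℝ) * p i = (k : ℝ) * γ) ∧
    h = shannonEntropy k p }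

section HtildeAux

open Real Finset

lemma expDeriv (c : ℝ) (hc : 0 < c) (s : ℝ) (hs : 0 ≤ s) :
    HasDerivAt (fun t : ℝ => Real.log (Real.exp (c * (t + 1)) - 1))
      (c * Real.exp (c * (s + 1)) / (Real.exp (c * (s + 1)) - 1)) s := by
  have h1 : HasDerivAt (fun t : ℝ => c * (t + 1)) c s := by
    simpa using ((hasDerivAt_id s).add_const 1).const_mul c
  have h2 : HasDerivAt (fun t : ℝ => Real.exp (c * (t + 1)) - 1)
      (c * Real.exp (c * (s + 1))) s := by
    simpa [mul_comm] using (h1.exp.sub_const 1)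
  have hne : Real.exp (c * (s + 1)) - 1 ≠ 0 := by
    have : (1:ℝ) < Real.exp (c * (s + 1)) := Real.one_lt_exp_iff.2 (by nlinarith)
    linarith
  simpa using h2.log hne

lemma logGeomConcave (c : ℝ) (hc : 0 < c) :
    ConcaveOn ℝ (Set.Ici (0:ℝ)) (fun t : ℝ => Real.log (Real.exp (c * (t + 1)) - 1)) := by
  have hint : interior (Set.Ici (0:ℝ)) = Set.Ioi 0 := interior_Ici
  apply AntitoneOn.concaveOn_of_deriv (convex_Ici 0)
  · intro s hs
    exact ((expDeriv c hc s hs).continuousAt).continuousWithinAt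
  · rw [hint]
    intro s hs
    exact ((expDeriv c hc s (le_of_lt hs)).differentiableAt).differentiableWithinAt
  · rw [hint]
    intro a ha b hb hab
    rw [(expDeriv c hc a (le_of_lt ha)).deriv, (expDeriv c hc b (le_of_lt hb)).deriv]
    have hEa : (1:ℝ) < Real.exp (c * (a + 1)) :=
      Real.one_lt_exp_iff.2 (by nlinarith [Set.mem_Ioi.1 ha])
    have hEb : (1:ℝ) < Real.exp (c * (b + 1)) :=
      Real.one_lt_exp_iff.2 (by nlinarith [Set.mem_Ioi.1 hb])
    have hle : Real.exp (c * (a + 1)) ≤ Real.exp (c * (b + 1)) :=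
      Real.exp_le_exp.2 (by nlinarith)
    rw [div_le_div_iff₀ (by linarith) (by linarith)]
    nlinarith

lemma sum_pow_pos (x : ℝ) (hx : 0 < x) (k : ℕ) : 0 < ∑ i ∈ range (k+1), x^i :=
  Finset.sum_pos (fun i _ => pow_pos hx i) nonempty_range_add_one

lemma log_sum_pow_eq (x : ℝ) (hx : 1 < x) (k : ℕ) :
    Real.log (∑ i ∈ range (k+1), x^i)
      = Real.log (Real.exp (Real.log x * ((k:ℝ) + 1)) - 1) - Real.log (x - 1) := by
  have hx0 : (0:ℝ) < x := by linarith
  have hpow : Real.exp (Real.log x * ((k:ℝ) + 1)) = x ^ (k+1) := by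
    have : Real.log x * ((k:ℝ) + 1) = ((k+1 : ℕ) : ℝ) * Real.log x := by push_cast; ring
    rw [this, Real.exp_nat_mul, Real.exp_log hx0]
  rw [hpow, geom_sum_eq (ne_of_gt hx), Real.log_div, sub_right_inj]
  · exact ne_of_gt (by have := one_lt_pow₀ hx (Nat.succ_ne_zero k); simp only [Nat.succ_eq_add_one] at this; linarith)
  · exact ne_of_gt (by linarith)

lemma sum_pow_conc_ge1 (x : ℝ) (hx : 1 ≤ x) (k₁ k₂ k₃ : ℕ)
    (β : ℝ) (hβ0 : 0 ≤ β) (hβ1 : β ≤ 1)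
    (hcomb : β * k₁ + (1 - β) * k₃ = (k₂:ℝ)) :
    β * Real.logb 2 (∑ i ∈ range (k₁+1), x^i)
      + (1-β) * Real.logb 2 (∑ i ∈ range (k₃+1), x^i)
      ≤ Real.logb 2 (∑ i ∈ range (k₂+1), x^i) := by
  have key : β * Real.log (∑ i ∈ range (k₁+1), x^i)
      + (1-β) * Real.log (∑ i ∈ range (k₃+1), x^i)
      ≤ Real.log (∑ i ∈ range (k₂+1), x^i) := by
    rcases eq_or_lt_of_le hx with heq | hlt
    · -- x = 1
      subst heq
      simp only [one_pow, Finset.sum_const, card_range, smul_eq_mul, nsmul_eq_mul, mul_one]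
      have hc := (StrictConcaveOn.concaveOn strictConcaveOn_log_Ioi).2
        (Set.mem_Ioi.2 (by positivity : (0:ℝ) < (k₁:ℝ)+1))
        (Set.mem_Ioi.2 (by positivity : (0:ℝ) < (k₃:ℝ)+1))
        hβ0 (by linarith : (0:ℝ) ≤ 1 - β) (by ring)
      simp only [smul_eq_mul] at hc
      have : β * ((k₁:ℝ)+1) + (1-β) * ((k₃:ℝ)+1) = (k₂:ℝ)+1 := by
        rw [← hcomb]; ring
      rw [this] at hc
      push_cast
      convert hc using 2 <;> push_cast <;> ring
    · -- x > 1
      set c := Real.log x with hcdef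
      have hc : 0 < c := Real.log_pos hlt
      have hconc := (logGeomConcave c hc).2
        (Set.mem_Ici.2 (Nat.cast_nonneg k₁)) (Set.mem_Ici.2 (Nat.cast_nonneg k₃))
        hβ0 (by linarith : (0:ℝ) ≤ 1 - β) (by ring)
      simp only [smul_eq_mul] at hconc
      rw [hcomb] at hconc
      rw [log_sum_pow_eq x hlt k₁, log_sum_pow_eq x hlt k₃, log_sum_pow_eq x hlt k₂]
      nlinarith [hconc]
  have h2 : (0:ℝ) ≤ (Real.log 2)⁻¹ := by positivity
  simp only [Real.logb]
  calc β * (Real.log (∑ i ∈ range (k₁+1), x^i) / Real.log 2)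
      + (1-β) * (Real.log (∑ i ∈ range (k₃+1), x^i) / Real.log 2)
      = (β * Real.log (∑ i ∈ range (k₁+1), x^i)
        + (1-β) * Real.log (∑ i ∈ range (k₃+1), x^i)) * (Real.log 2)⁻¹ := by ring
    _ ≤ Real.log (∑ i ∈ range (k₂+1), x^i) * (Real.log 2)⁻¹ :=
        mul_le_mul_of_nonneg_right key h2
    _ = _ := by rw [div_eq_mul_inv]

lemma sum_pow_reflect (x : ℝ) (hx : x ≠ 0) (k : ℕ) :
    ∑ i ∈ range (k+1), x^i = x^k * ∑ i ∈ range (k+1), (x⁻¹)^i := by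
  rw [Finset.mul_sum]
  have : ∀ i ∈ range (k+1), x^k * (x⁻¹)^i = x^(k-i) := by
    intro i hi
    have hik : i ≤ k := Nat.lt_succ_iff.1 (mem_range.1 hi)
    rw [inv_pow, ← div_eq_mul_inv, pow_sub₀ x hx hik]; exact div_eq_mul_inv _ _
  rw [Finset.sum_congr rfl this]
  exact (Finset.sum_range_reflect (fun i => x^i) (k+1)).symm

lemma logb_sum_pow_reflect (x : ℝ) (hx : 0 < x) (k : ℕ) :
    Real.logb 2 (∑ i ∈ range (k+1), x^i)
      = (k:ℝ) * Real.logb 2 x + Real.logb 2 (∑ i ∈ range (k+1), (x⁻¹)^i) := by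
  rw [sum_pow_reflect x (ne_of_gt hx) k, Real.logb_mul (by positivity)
    (ne_of_gt (sum_pow_pos x⁻¹ (by positivity) k)), Real.logb_pow]

lemma sum_pow_conc (x : ℝ) (hx : 0 < x) (k₁ k₂ k₃ : ℕ)
    (β : ℝ) (hβ0 : 0 ≤ β) (hβ1 : β ≤ 1)
    (hcomb : β * k₁ + (1 - β) * k₃ = (k₂:ℝ)) :
    β * Real.logb 2 (∑ i ∈ range (k₁+1), x^i)
      + (1-β) * Real.logb 2 (∑ i ∈ range (k₃+1), x^i)
      ≤ Real.logb 2 (∑ i ∈ range (k₂+1), x^i) := by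
  rcases le_or_gt 1 x with h1 | h1
  · exact sum_pow_conc_ge1 x h1 k₁ k₂ k₃ β hβ0 hβ1 hcomb
  · have hinv : (1:ℝ) ≤ x⁻¹ := one_le_inv_iff₀.2 ⟨hx, le_of_lt h1⟩
    have key := sum_pow_conc_ge1 x⁻¹ hinv k₁ k₂ k₃ β hβ0 hβ1 hcomb
    rw [logb_sum_pow_reflect x hx k₁, logb_sum_pow_reflect x hx k₃,
      logb_sum_pow_reflect x hx k₂]
    have hL : (β * k₁ + (1-β) * k₃) * Real.logb 2 x = (k₂:ℝ) * Real.logb 2 x := by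
      rw [hcomb]
    nlinarith [key, hL]

lemma term_ineq (p q : ℝ) (hp : 0 ≤ p) (hq : 0 < q) :
    p * Real.logb 2 q - p * Real.logb 2 p ≤ (q - p) / Real.log 2 := by
  have h2 : (0:ℝ) < Real.log 2 := Real.log_pos one_lt_two
  rcases eq_or_lt_of_le hp with h | h
  · rw [← h]; simp; positivity
  · have hlog : Real.log (q / p) ≤ q / p - 1 := Real.log_le_sub_one_of_pos (by positivity)
    rw [Real.log_div (ne_of_gt hq) (ne_of_gt h)] at hlog
    have h3 : p * (Real.log q - Real.log p) ≤ q - p := by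
      calc p * (Real.log q - Real.log p) ≤ p * (q/p - 1) :=
            mul_le_mul_of_nonneg_left hlog (le_of_lt h)
        _ = q - p := by field_simp
    calc p * Real.logb 2 q - p * Real.logb 2 p
        = p * (Real.log q - Real.log p) / Real.log 2 := by
          simp only [Real.logb]; ring
      _ ≤ (q - p) / Real.log 2 := by gcongr
  
lemma entropy_le_cross (k : ℕ) (p q : ℕ → ℝ)
    (hp0 : ∀ i ∈ range (k+1), 0 ≤ p i) (hp1 : ∑ i ∈ range (k+1), p i = 1)
    (hq0 : ∀ i ∈ range (k+1), 0 < q i) (hq1 : ∑ i ∈ range (k+1), q i = 1) :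
    shannonEntropy k p ≤ -∑ i ∈ range (k+1), p i * Real.logb 2 (q i) := by
  have hsum : ∑ i ∈ range (k+1), (p i * Real.logb 2 (q i) - p i * Real.logb 2 (p i))
      ≤ ∑ i ∈ range (k+1), (q i - p i) / Real.log 2 :=
    Finset.sum_le_sum (fun i hi => term_ineq (p i) (q i) (hp0 i hi) (hq0 i hi))
  rw [Finset.sum_sub_distrib] at hsum
  have : ∑ i ∈ range (k+1), (q i - p i) / Real.log 2
      = (∑ i ∈ range (k+1), q i - ∑ i ∈ range (k+1), p i) / Real.log 2 := by
    rw [← Finset.sum_div, Finset.sum_sub_distrib]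
  rw [this, hq1, hp1] at hsum
  simp only [shannonEntropy]
  simp at hsum
  linarith

lemma cross_entropy_eq (k : ℕ) (x : ℝ) (hx : 0 < x) (p : ℕ → ℝ)
    (hp1 : ∑ i ∈ range (k+1), p i = 1) :
    -∑ i ∈ range (k+1), p i * Real.logb 2 (x^i / (∑ j ∈ range (k+1), x^j))
      = -(Real.logb 2 x) * (∑ i ∈ range (k+1), (i:ℝ) * p i)
        + Real.logb 2 (∑ j ∈ range (k+1), x^j) := by
  have hZ : (0:ℝ) < ∑ j ∈ range (k+1), x^j :=
    Finset.sum_pos (fun i _ => pow_pos hx i) nonempty_range_add_one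
  have hterm : ∀ i ∈ range (k+1), p i * Real.logb 2 (x^i / (∑ j ∈ range (k+1), x^j))
      = ((i:ℝ) * p i) * Real.logb 2 x - p i * Real.logb 2 (∑ j ∈ range (k+1), x^j) := by
    intro i _
    rw [Real.logb_div (by positivity) (ne_of_gt hZ), Real.logb_pow]
    ring
  rw [Finset.sum_congr rfl hterm, Finset.sum_sub_distrib, ← Finset.sum_mul, ← Finset.sum_mul,
    hp1]
  ring

lemma exists_gibbs_x (k : ℕ) (hk : 0 < k) (m : ℝ) (hm0 : 0 < m) (hmk : m < k) :
    ∃ x : ℝ, 0 < x ∧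
      ∑ i ∈ range (k+1), (i:ℝ) * x^i = m * ∑ i ∈ range (k+1), x^i := by
  set F : ℝ → ℝ := fun x => ∑ i ∈ range (k+1), ((i:ℝ) - m) * x^i with hF
  have hcont : Continuous F := by
    apply continuous_finset_sum
    intro i _
    exact continuous_const.mul (continuous_pow i)
  set a : ℝ := min 1 (m / (2*((k:ℝ)+1)^2)) with ha
  set b : ℝ := max 1 (((k:ℝ)^2+1)/((k:ℝ)-m)) with hb
  have hk1 : (0:ℝ) < (k:ℝ) := by exact_mod_cast hk
  have ha0 : 0 < a := lt_min one_pos (by positivity)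
  have ha1 : a ≤ 1 := min_le_left _ _
  have hb1 : (1:ℝ) ≤ b := le_max_left _ _
  have hab : a ≤ b := le_trans ha1 hb1
  -- F a ≤ 0
  have hFa : F a ≤ 0 := by
    have h1 : ∑ i ∈ range (k+1), (i:ℝ) * a^i ≤ ((k:ℝ)+1)^2 * a := by
      have hterm : ∀ i ∈ range (k+1), (i:ℝ) * a^i ≤ ((k:ℝ)+1) * a := by
        intro i hi
        have hik : (i:ℝ) ≤ (k:ℝ)+1 := by
          have h' : i ≤ k + 1 := le_of_lt (mem_range.1 hi)
          exact_mod_cast h'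
        rcases Nat.eq_zero_or_pos i with h | h
        · subst h; simp; positivity
        · have hpow : a^i ≤ a := by
            calc a^i ≤ a^1 := pow_le_pow_of_le_one (le_of_lt ha0) ha1 h
              _ = a := pow_one a
          calc (i:ℝ) * a^i ≤ ((k:ℝ)+1) * a^i :=
                mul_le_mul_of_nonneg_right hik (by positivity)
            _ ≤ ((k:ℝ)+1) * a := mul_le_mul_of_nonneg_left hpow (by positivity)
      calc ∑ i ∈ range (k+1), (i:ℝ) * a^i ≤ ∑ _i ∈ range (k+1), ((k:ℝ)+1) * a :=
            Finset.sum_le_sum hterm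
        _ = ((k:ℝ)+1) * (((k:ℝ)+1) * a) := by
            rw [Finset.sum_const, card_range]; push_cast; ring
        _ = ((k:ℝ)+1)^2 * a := by ring
    have h2 : (1:ℝ) ≤ ∑ i ∈ range (k+1), a^i := by
      have h0 : (1:ℝ) = a^0 := by simp
      rw [h0]
      exact Finset.single_le_sum (f := fun i => a^i)
        (fun i _ => by positivity) (mem_range.2 (Nat.succ_pos k))
    have h3 : ((k:ℝ)+1)^2 * a ≤ m/2 := by
      calc ((k:ℝ)+1)^2 * a ≤ ((k:ℝ)+1)^2 * (m / (2*((k:ℝ)+1)^2)) := by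
            apply mul_le_mul_of_nonneg_left (min_le_right _ _) (by positivity)
        _ = m/2 := by field_simp
    have hFeq : F a = ∑ i ∈ range (k+1), (i:ℝ) * a^i - m * ∑ i ∈ range (k+1), a^i := by
      rw [hF]
      simp only
      rw [Finset.mul_sum, ← Finset.sum_sub_distrib]
      apply Finset.sum_congr rfl
      intro i _; ring
    rw [hFeq]
    nlinarith [mul_le_mul_of_nonneg_left h2 (le_of_lt hm0)]
  -- 0 ≤ F b
  have hFb : 0 ≤ F b := by
    have hkm : (0:ℝ) < (k:ℝ) - m := by linarith
    have hbk : ((k:ℝ)^2+1)/((k:ℝ)-m) ≤ b := le_max_right _ _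
    have hbge : (k:ℝ)^2 + 1 ≤ ((k:ℝ)-m) * b := by
      rw [div_le_iff₀ hkm] at hbk; linarith [hbk]
    have hsplit : F b = ((k:ℝ) - m) * b^k + ∑ i ∈ range k, ((i:ℝ) - m) * b^i := by
      rw [hF]; simp only; rw [Finset.sum_range_succ]; ring
    have hlow : ∀ i ∈ range k, -((k:ℝ) * b^(k-1)) ≤ ((i:ℝ) - m) * b^i := by
      intro i hi
      have hik : i ≤ k - 1 := by have := mem_range.1 hi; omega
      have hbi : b^i ≤ b^(k-1) := pow_le_pow_right₀ hb1 hik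
      have hbi0 : (0:ℝ) ≤ b^i := by positivity
      have him : -(k:ℝ) ≤ (i:ℝ) - m := by
        have : (0:ℝ) ≤ (i:ℝ) := Nat.cast_nonneg i
        linarith
      nlinarith
    have hsum : -((k:ℝ) * ((k:ℝ) * b^(k-1))) ≤ ∑ i ∈ range k, ((i:ℝ) - m) * b^i := by
      calc -((k:ℝ) * ((k:ℝ) * b^(k-1))) = ∑ _i ∈ range k, -((k:ℝ) * b^(k-1)) := by
            rw [Finset.sum_const, card_range]; push_cast; ring
        _ ≤ _ := Finset.sum_le_sum hlow
    have hbk1 : (1:ℝ) ≤ b^(k-1) := one_le_pow₀ hb1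
    have hpowsplit : b^k = b^(k-1) * b := by
      conv_lhs => rw [← Nat.succ_pred_eq_of_pos hk]
      rw [pow_succ, Nat.pred_eq_sub_one]
    rw [hsplit, hpowsplit]
    nlinarith
  have := intermediate_value_Icc hab hcont.continuousOn
  have h0mem : (0:ℝ) ∈ Set.Icc (F a) (F b) := ⟨hFa, hFb⟩
  obtain ⟨x, hxab, hFx⟩ := this h0mem
  refine ⟨x, lt_of_lt_of_le ha0 hxab.1, ?_⟩
  have : F x = ∑ i ∈ range (k+1), (i:ℝ) * x^i - m * ∑ i ∈ range (k+1), x^i := by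
    rw [hF]; simp only
    rw [Finset.mul_sum, ← Finset.sum_sub_distrib]
    apply Finset.sum_congr rfl
    intro i _; ring
  rw [hFx] at this
  linarith [this]

def Sset (k : ℕ) (γ : ℝ) : Set ℝ :=
  { h : ℝ | ∃ p : ℕ → ℝ,
    (∀ i ∈ Finset.range (k + 1), 0 ≤ p i) ∧
    (∑ i ∈ Finset.range (k + 1), p i = 1) ∧
    (∑ i ∈ Finset.range (k + 1), (i : ℝ) * p i = (k : ℝ) * γ) ∧
    h = shannonEntropy k p }

lemma Htilde_eq (k : ℕ) (γ : ℝ) : Htilde k γ = (1 / (k:ℝ)) * sSup (Sset k γ) := rfl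

lemma weak_duality (k : ℕ) (x : ℝ) (hx : 0 < x) (p : ℕ → ℝ)
    (hp0 : ∀ i ∈ range (k+1), 0 ≤ p i) (hp1 : ∑ i ∈ range (k+1), p i = 1) :
    shannonEntropy k p ≤ -(Real.logb 2 x) * (∑ i ∈ range (k+1), (i:ℝ) * p i)
      + Real.logb 2 (∑ j ∈ range (k+1), x^j) := by
  have hZ : (0:ℝ) < ∑ j ∈ range (k+1), x^j :=
    Finset.sum_pos (fun i _ => pow_pos hx i) nonempty_range_add_one
  have hq0 : ∀ i ∈ range (k+1), 0 < x^i / (∑ j ∈ range (k+1), x^j) :=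
    fun i _ => by positivity
  have hq1 : ∑ i ∈ range (k+1), x^i / (∑ j ∈ range (k+1), x^j) = 1 := by
    rw [← Finset.sum_div, div_self (ne_of_gt hZ)]
  have h := entropy_le_cross k p _ hp0 hp1 hq0 hq1
  rwa [cross_entropy_eq k x hx p hp1] at h

/-- the two-point feasible distribution -/
lemma witness_mem (k : ℕ) (hk : 0 < k) (γ : ℝ) (hγ : γ ∈ Set.Icc (0:ℝ) 1) :
    ∃ h, h ∈ Sset k γ := by
  set p : ℕ → ℝ := fun i => (if i = 0 then 1-γ else 0) + (if i = k then γ else 0) with hp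
  refine ⟨shannonEntropy k p, p, ?_, ?_, ?_, rfl⟩
  · intro i _
    have := hγ.1; have := hγ.2
    have hk0 : k ≠ 0 := Nat.pos_iff_ne_zero.mp hk
    have hk0' : (0:ℕ) ≠ k := Ne.symm hk0
    rcases eq_or_ne i 0 with h | h <;> rcases eq_or_ne i k with h' | h' <;>
      simp [hp, h, h', hk0, hk0'] <;> linarith
  · rw [hp]
    rw [Finset.sum_add_distrib, Finset.sum_ite_eq' (range (k+1)) 0 (fun _ => 1-γ),
      Finset.sum_ite_eq' (range (k+1)) k (fun _ => γ)]
    simp [mem_range, Nat.lt_succ_iff]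
  · rw [hp]
    have : ∀ i ∈ range (k+1), (i:ℝ) * ((if i = 0 then 1-γ else 0) + (if i = k then γ else 0))
        = (if i = 0 then (i:ℝ)*(1-γ) else 0) + (if i = k then (i:ℝ)*γ else 0) := by
      intro i _
      have hk0 : k ≠ 0 := Nat.pos_iff_ne_zero.mp hk
      rcases eq_or_ne i 0 with h | h <;> rcases eq_or_ne i k with h' | h' <;>
        simp [h, h', hk0] <;> ring
    rw [Finset.sum_congr rfl this, Finset.sum_add_distrib,
      Finset.sum_ite_eq' (range (k+1)) 0 (fun i => (i:ℝ)*(1-γ)),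
      Finset.sum_ite_eq' (range (k+1)) k (fun i => (i:ℝ)*γ)]
    simp [mem_range, Nat.lt_succ_iff]

lemma bddAbove_Sset (k : ℕ) (γ : ℝ) : BddAbove (Sset k γ) := by
  refine ⟨Real.logb 2 ((k:ℝ)+1), ?_⟩
  rintro h ⟨p, hp0, hp1, hpm, rfl⟩
  have := weak_duality k 1 one_pos p hp0 hp1
  simpa using this

lemma entropy_nonneg (k : ℕ) (p : ℕ → ℝ)
    (hp0 : ∀ i ∈ range (k+1), 0 ≤ p i) (hp1 : ∑ i ∈ range (k+1), p i = 1) :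
    0 ≤ shannonEntropy k p := by
  rw [shannonEntropy, neg_nonneg]
  apply Finset.sum_nonpos
  intro i hi
  have h1 : p i ≤ 1 := by
    rw [← hp1]
    exact Finset.single_le_sum hp0 hi
  rcases eq_or_lt_of_le (hp0 i hi) with h | h
  · rw [← h]; simp
  · have : Real.logb 2 (p i) ≤ 0 := Real.logb_nonpos one_lt_two (le_of_lt h) h1
    exact mul_nonpos_of_nonneg_of_nonpos (le_of_lt h) this

lemma Htilde_nonneg (k : ℕ) (hk : 0 < k) (γ : ℝ) (hγ : γ ∈ Set.Icc (0:ℝ) 1) :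
    0 ≤ Htilde k γ := by
  obtain ⟨h, p, hp0, hp1, hpm, rfl⟩ := witness_mem k hk γ hγ
  rw [Htilde_eq]
  have h1 : 0 ≤ sSup (Sset k γ) :=
    le_trans (entropy_nonneg k p hp0 hp1)
      (le_csSup (bddAbove_Sset k γ) ⟨p, hp0, hp1, hpm, rfl⟩)
  positivity

lemma entropy_of_point (k : ℕ) (p : ℕ → ℝ) (j : ℕ) (hj : j ∈ range (k+1))
    (hpj : p j = 1) (hothers : ∀ i ∈ range (k+1), i ≠ j → p i = 0) :
    shannonEntropy k p = 0 := by
  rw [shannonEntropy, neg_eq_zero]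
  apply Finset.sum_eq_zero
  intro i hi
  rcases eq_or_ne i j with h | h
  · rw [h, hpj, Real.logb_one, mul_zero]
  · rw [hothers i hi h, zero_mul]

lemma Htilde_zero_nonpos (k : ℕ) (hk : 0 < k) : Htilde k 0 ≤ 0 := by
  rw [Htilde_eq]
  have hle : sSup (Sset k 0) ≤ 0 := by
    apply csSup_le
    · obtain ⟨h, hh⟩ := witness_mem k hk 0 ⟨le_refl _, zero_le_one⟩
      exact ⟨h, hh⟩
    · rintro h ⟨p, hp0, hp1, hpm, rfl⟩
      rw [mul_zero] at hpm
      have hzero : ∀ i ∈ range (k+1), (i:ℝ) * p i = 0 :=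
        (Finset.sum_eq_zero_iff_of_nonneg
          (fun i hi => mul_nonneg (Nat.cast_nonneg i) (hp0 i hi))).1 hpm
      have hothers : ∀ i ∈ range (k+1), i ≠ 0 → p i = 0 := by
        intro i hi hne
        have := hzero i hi
        have : (i:ℝ) ≠ 0 := Nat.cast_ne_zero.2 hne
        have h2 := hzero i hi
        exact (mul_eq_zero.1 h2).resolve_left this
      have hp0' : p 0 = 1 := by
        rw [← hp1]
        exact (Finset.sum_eq_single_of_mem 0 (mem_range.2 (Nat.succ_pos k))
          (fun i hi hne => hothers i hi hne)).symm
      rw [entropy_of_point k p 0 (mem_range.2 (Nat.succ_pos k)) hp0' hothers]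
  have : (0:ℝ) ≤ 1/(k:ℝ) := by positivity
  exact mul_nonpos_of_nonneg_of_nonpos this hle

lemma Htilde_one_nonpos (k : ℕ) (hk : 0 < k) : Htilde k 1 ≤ 0 := by
  rw [Htilde_eq]
  have hle : sSup (Sset k 1) ≤ 0 := by
    apply csSup_le
    · obtain ⟨h, hh⟩ := witness_mem k hk 1 ⟨zero_le_one, le_refl _⟩
      exact ⟨h, hh⟩
    · rintro h ⟨p, hp0, hp1, hpm, rfl⟩
      rw [mul_one] at hpm
      have hsum0 : ∑ i ∈ range (k+1), ((k:ℝ) - i) * p i = 0 := by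
        have : ∑ i ∈ range (k+1), ((k:ℝ) - i) * p i
            = (k:ℝ) * ∑ i ∈ range (k+1), p i - ∑ i ∈ range (k+1), (i:ℝ) * p i := by
          rw [Finset.mul_sum, ← Finset.sum_sub_distrib]
          exact Finset.sum_congr rfl (fun i _ => by ring)
        rw [this, hp1, hpm]; ring
      have hzero : ∀ i ∈ range (k+1), ((k:ℝ) - i) * p i = 0 := by
        apply (Finset.sum_eq_zero_iff_of_nonneg _).1 hsum0
        intro i hi
        have : (i:ℝ) ≤ (k:ℝ) := by
          exact_mod_cast Nat.lt_succ_iff.1 (mem_range.1 hi)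
        exact mul_nonneg (by linarith) (hp0 i hi)
      have hothers : ∀ i ∈ range (k+1), i ≠ k → p i = 0 := by
        intro i hi hne
        have hik : i < k := lt_of_le_of_ne (Nat.lt_succ_iff.1 (mem_range.1 hi)) hne
        have : (k:ℝ) - i ≠ 0 := by
          have : (i:ℝ) < (k:ℝ) := by exact_mod_cast hik
          linarith
        exact (mul_eq_zero.1 (hzero i hi)).resolve_left this
      have hpk : p k = 1 := by
        rw [← hp1]
        exact (Finset.sum_eq_single_of_mem k (mem_range.2 (Nat.lt_succ_self k))
          (fun i hi hne => hothers i hi hne)).symm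
      rw [entropy_of_point k p k (mem_range.2 (Nat.lt_succ_self k)) hpk hothers]
  have : (0:ℝ) ≤ 1/(k:ℝ) := by positivity
  exact mul_nonpos_of_nonneg_of_nonpos this hle

lemma sum_pow_pos' (x : ℝ) (hx : 0 < x) (k : ℕ) : 0 < ∑ i ∈ range (k+1), x^i :=
  Finset.sum_pos (fun i _ => pow_pos hx i) nonempty_range_add_one

lemma sSup_le_dual (k : ℕ) (hk : 0 < k) (γ : ℝ) (hγ : γ ∈ Set.Icc (0:ℝ) 1)
    (x : ℝ) (hx : 0 < x) :
    sSup (Sset k γ) ≤ -(Real.logb 2 x) * ((k:ℝ)*γ)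
      + Real.logb 2 (∑ j ∈ range (k+1), x^j) := by
  apply csSup_le (witness_mem k hk γ hγ)
  rintro h ⟨p, hp0, hp1, hpm, rfl⟩
  have := weak_duality k x hx p hp0 hp1
  rwa [hpm] at this

lemma dual_le_sSup (k : ℕ) (hk : 0 < k) (γ : ℝ) (x : ℝ) (hx : 0 < x)
    (hmean : ∑ i ∈ range (k+1), (i:ℝ) * x^i = ((k:ℝ)*γ) * ∑ i ∈ range (k+1), x^i) :
    -(Real.logb 2 x) * ((k:ℝ)*γ) + Real.logb 2 (∑ j ∈ range (k+1), x^j)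
      ≤ sSup (Sset k γ) := by
  have hZ : 0 < ∑ j ∈ range (k+1), x^j := sum_pow_pos' x hx k
  set q : ℕ → ℝ := fun i => x^i / (∑ j ∈ range (k+1), x^j) with hq
  have hq0 : ∀ i ∈ range (k+1), 0 ≤ q i := fun i _ => by rw [hq]; positivity
  have hq1 : ∑ i ∈ range (k+1), q i = 1 := by
    rw [hq]; simp only; rw [← Finset.sum_div, div_self (ne_of_gt hZ)]
  have hqm : ∑ i ∈ range (k+1), (i:ℝ) * q i = (k:ℝ)*γ := by
    rw [hq]; simp only
    have h' : ∀ i ∈ range (k+1), (i:ℝ) * (x^i / (∑ j ∈ range (k+1), x^j))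
        = ((i:ℝ) * x^i) / (∑ j ∈ range (k+1), x^j) := fun i _ => by ring
    rw [Finset.sum_congr rfl h', ← Finset.sum_div, hmean, mul_div_assoc,
      div_self (ne_of_gt hZ), mul_one]
  have hent : shannonEntropy k q = -(Real.logb 2 x) * ((k:ℝ)*γ)
      + Real.logb 2 (∑ j ∈ range (k+1), x^j) := by
    have hce := cross_entropy_eq k x hx q hq1
    rw [hqm] at hce
    rw [shannonEntropy, ← hce]
  rw [← hent]
  exact le_csSup (bddAbove_Sset k γ) ⟨q, hq0, hq1, hqm, rfl⟩


end HtildeAux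

open Real Finset in
set_option maxHeartbeats 1000000 in
/-- `H̃` is concave in the pair `(γ, 1/k)`. -/
theorem Htilde_concave_in_pair
    (k₁ k₂ k₃ : ℕ) (hk₁ : 0 < k₁) (hk₂ : 0 < k₂) (hk₃ : 0 < k₃)
    (γ₁ γ₂ γ₃ : ℝ)
    (hγ₁ : γ₁ ∈ Set.Icc (0 : ℝ) 1) (hγ₂ : γ₂ ∈ Set.Icc (0 : ℝ) 1)
    (hγ₃ : γ₃ ∈ Set.Icc (0 : ℝ) 1)
    (α : ℝ) (hα : α ∈ Set.Icc (0 : ℝ) 1)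
    (hγ : α * γ₁ + (1 - α) * γ₃ = γ₂)
    (hk : α * (1 / (k₁ : ℝ)) + (1 - α) * (1 / (k₃ : ℝ)) = 1 / (k₂ : ℝ)) :
    α * Htilde k₁ γ₁ + (1 - α) * Htilde k₃ γ₃ ≤ Htilde k₂ γ₂ := by
  obtain ⟨hα0, hα1⟩ := hα
  have hα1' : 0 ≤ 1 - α := by linarith
  -- degenerate case helper
  have deg : ∀ (c : ℝ) (j : ℕ), 0 < j → 0 ≤ c → γ₂ = 0 ∨ γ₂ = 1 →
      ∀ g : ℝ, g ∈ Set.Icc (0:ℝ) 1 → c * g = c * γ₂ → c * Htilde j g ≤ 0 := by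
    intro c j hj hc hcase g hg hcg
    rcases eq_or_lt_of_le hc with h | h
    · rw [← h]; simp
    · have hgeq : g = γ₂ := by
        have := mul_left_cancel₀ (ne_of_gt h) hcg
        exact this
      rcases hcase with h2 | h2
      · rw [hgeq, h2]
        exact mul_nonpos_of_nonneg_of_nonpos hc (Htilde_zero_nonpos j hj)
      · rw [hgeq, h2]
        exact mul_nonpos_of_nonneg_of_nonpos hc (Htilde_one_nonpos j hj)
  rcases eq_or_lt_of_le hγ₂.1 with hγ₂0 | hγ₂0
  · -- γ₂ = 0
    have h1 : α * γ₁ = 0 ∧ (1-α) * γ₃ = 0 := by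
      constructor <;> nlinarith [mul_nonneg hα0 hγ₁.1, mul_nonneg hα1' hγ₃.1]
    have t1 : α * Htilde k₁ γ₁ ≤ 0 :=
      deg α k₁ hk₁ hα0 (Or.inl hγ₂0.symm) γ₁ hγ₁ (by rw [h1.1, ← hγ₂0]; ring)
    have t3 : (1-α) * Htilde k₃ γ₃ ≤ 0 :=
      deg (1-α) k₃ hk₃ hα1' (Or.inl hγ₂0.symm) γ₃ hγ₃ (by rw [h1.2, ← hγ₂0]; ring)
    have t2 : 0 ≤ Htilde k₂ γ₂ := Htilde_nonneg k₂ hk₂ γ₂ hγ₂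
    linarith
  rcases eq_or_lt_of_le hγ₂.2 with hγ₂1 | hγ₂1
  · -- γ₂ = 1
    have h1 : α * (1 - γ₁) = 0 ∧ (1-α) * (1 - γ₃) = 0 := by
      constructor <;>
        nlinarith [mul_nonneg hα0 (by linarith [hγ₁.2] : (0:ℝ) ≤ 1 - γ₁),
          mul_nonneg hα1' (by linarith [hγ₃.2] : (0:ℝ) ≤ 1 - γ₃)]
    have t1 : α * Htilde k₁ γ₁ ≤ 0 :=
      deg α k₁ hk₁ hα0 (Or.inr hγ₂1) γ₁ hγ₁ (by rw [hγ₂1]; nlinarith [h1.1])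
    have t3 : (1-α) * Htilde k₃ γ₃ ≤ 0 :=
      deg (1-α) k₃ hk₃ hα1' (Or.inr hγ₂1) γ₃ hγ₃ (by rw [hγ₂1]; nlinarith [h1.2])
    have t2 : 0 ≤ Htilde k₂ γ₂ := Htilde_nonneg k₂ hk₂ γ₂ hγ₂
    linarith
  -- main case 0 < γ₂ < 1
  have hK1 : (0:ℝ) < (k₁:ℝ) := by exact_mod_cast hk₁
  have hK2 : (0:ℝ) < (k₂:ℝ) := by exact_mod_cast hk₂
  have hK3 : (0:ℝ) < (k₃:ℝ) := by exact_mod_cast hk₃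
  have hm0 : 0 < (k₂:ℝ) * γ₂ := by positivity
  have hmk : (k₂:ℝ) * γ₂ < (k₂:ℝ) := by nlinarith
  obtain ⟨x, hx, hmean⟩ := exists_gibbs_x k₂ hk₂ ((k₂:ℝ) * γ₂) hm0 hmk
  set β : ℝ := α * (k₂:ℝ) / (k₁:ℝ) with hβ
  have hkk : α * (k₃:ℝ) * (k₂:ℝ) + (1 - α) * (k₁:ℝ) * (k₂:ℝ) = (k₁:ℝ) * (k₃:ℝ) := by
    have hk' := hk
    field_simp at hk'
    linarith [hk']
  have hbk1 : β * (k₁:ℝ) = α * (k₂:ℝ) := by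
    rw [hβ, div_mul_cancel₀ _ (ne_of_gt hK1)]
  have hbk3 : (1 - β) * (k₃:ℝ) = (1 - α) * (k₂:ℝ) := by
    apply mul_right_cancel₀ (ne_of_gt hK1)
    have h8 : (1 - β) * (k₃:ℝ) * (k₁:ℝ) = (k₃:ℝ)*(k₁:ℝ) - (β*(k₁:ℝ))*(k₃:ℝ) := by ring
    rw [h8, hbk1]
    linear_combination (-1 : ℝ) * hkk
  have hβ0 : 0 ≤ β := by positivity
  have h1β0 : 0 ≤ 1 - β := by
    have h6 : 0 ≤ (1 - β) * (k₃:ℝ) := by rw [hbk3]; exact mul_nonneg hα1' hK2.le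
    nlinarith [h6, hK3]
  have hβ1 : β ≤ 1 := by linarith
  have hcomb : β * (k₁:ℝ) + (1 - β) * (k₃:ℝ) = (k₂:ℝ) := by
    rw [hbk1, hbk3]; ring
  have e1 : α * (1/(k₁:ℝ)) = β * (1/(k₂:ℝ)) := by
    rw [hβ]
    field_simp
  have e3 : (1-α) * (1/(k₃:ℝ)) = (1-β) * (1/(k₂:ℝ)) := by
    rw [hβ]
    field_simp
    linarith [hkk]
  have hid : β*((k₁:ℝ)*γ₁) + (1-β)*((k₃:ℝ)*γ₃) = (k₂:ℝ)*γ₂ := by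
    linear_combination γ₁*hbk1 + γ₃*hbk3 + (k₂:ℝ)*hγ
  have key := sum_pow_conc x hx k₁ k₂ k₃ β hβ0 hβ1 hcomb
  set L := Real.logb 2 x with hL
  set W₁ := Real.logb 2 (∑ i ∈ range (k₁+1), x^i) with hW1
  set W₂ := Real.logb 2 (∑ i ∈ range (k₂+1), x^i) with hW2
  set W₃ := Real.logb 2 (∑ i ∈ range (k₃+1), x^i) with hW3
  have hA1 : sSup (Sset k₁ γ₁) ≤ -L * ((k₁:ℝ)*γ₁) + W₁ := sSup_le_dual k₁ hk₁ γ₁ hγ₁ x hx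
  have hA3 : sSup (Sset k₃ γ₃) ≤ -L * ((k₃:ℝ)*γ₃) + W₃ := sSup_le_dual k₃ hk₃ γ₃ hγ₃ x hx
  have hA2 : -L * ((k₂:ℝ)*γ₂) + W₂ ≤ sSup (Sset k₂ γ₂) :=
    dual_le_sSup k₂ hk₂ γ₂ x hx hmean
  rw [Htilde_eq, Htilde_eq, Htilde_eq]
  set A₁ := sSup (Sset k₁ γ₁) with hA1d
  set A₂ := sSup (Sset k₂ γ₂) with hA2d
  set A₃ := sSup (Sset k₃ γ₃) with hA3d
  have step1 : α * (1/(k₁:ℝ) * A₁) + (1-α) * (1/(k₃:ℝ) * A₃)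
      = (1/(k₂:ℝ)) * (β*A₁ + (1-β)*A₃) := by
    linear_combination A₁ * e1 + A₃ * e3
  have step2 : β*A₁ + (1-β)*A₃
      ≤ β*(-L*((k₁:ℝ)*γ₁)+W₁) + (1-β)*(-L*((k₃:ℝ)*γ₃)+W₃) :=
    add_le_add (mul_le_mul_of_nonneg_left hA1 hβ0) (mul_le_mul_of_nonneg_left hA3 h1β0)
  have step3 : β*(-L*((k₁:ℝ)*γ₁)+W₁) + (1-β)*(-L*((k₃:ℝ)*γ₃)+W₃)
      ≤ -L*((k₂:ℝ)*γ₂) + W₂ := by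
    have hidL : (β*((k₁:ℝ)*γ₁) + (1-β)*((k₃:ℝ)*γ₃)) * L = ((k₂:ℝ)*γ₂)*L := by rw [hid]
    nlinarith [key, hidL]
  calc α * (1/(k₁:ℝ) * A₁) + (1-α) * (1/(k₃:ℝ) * A₃)
      = (1/(k₂:ℝ)) * (β*A₁ + (1-β)*A₃) := step1
    _ ≤ (1/(k₂:ℝ)) * A₂ :=
        mul_le_mul_of_nonneg_left (le_trans step2 (le_trans step3 hA2)) (by positivity)
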